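/- There is no 5-dimensional real unimodular solvable Lie algebra whose nilradical is isomorphic to the 3-dimensional Heisenberg Lie algebra 𝔥₃. -/

import Mathlib

open Module

lemma aux_scalars (a3 b3 c3 d3 a4 b4 c4 d4 r s : ℝ)
    (R1 : r*a3 + s*a4 = b3*c4 - b4*c3)
    (R2 : r*b3 + s*b4 = a3*b4 + b3*d4 - a4*b3 - b4*d3)
    (R3 : r*c3 + s*c4 = a4*c3 + c4*d3 - a3*c4 - c3*d4)
    (R4 : r*d3 + s*d4 = b4*c3 - b3*c4)
    (U1 : 2*(a3 + d3) + s = 0)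
    (U2 : 2*(a4 + d4) - r = 0) :
    ∃ t3 t4 k : ℝ, ¬(t3 = 0 ∧ t4 = 0) ∧ r = k*t3 ∧ s = k*t4 ∧
      (t3*a3+t4*a4) + (t3*d3+t4*d4) = 0 ∧
      (t3*a3+t4*a4)^2 + (t3*b3+t4*b4)*(t3*c3+t4*c4) = 0 := by
  by_cases hrs : r = 0 ∧ s = 0
  · obtain ⟨hr, hs⟩ := hrs
    subst hr; subst hs
    have hd3 : d3 = -a3 := by linarith
    have hd4 : d4 = -a4 := by linarith
    subst hd3; subst hd4
    have h1 : b3*c4 = b4*c3 := by linarith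
    have h2 : a3*b4 = a4*b3 := by linarith
    have h3 : a3*c4 = a4*c3 := by linarith
    by_cases hP : a3^2 + b3*c3 = 0
    · exact ⟨1, 0, 0, by simp, by ring, by ring, by ring, by linear_combination hP⟩
    · refine ⟨-(a3*a4+b3*c4), a3^2+b3*c3, 0, fun h => hP h.2, by ring, by ring, by ring, ?_⟩
      have key : (a3*a4+b3*c4)^2 = (a3^2+b3*c3)*(a4^2+b4*c4) := by
        linear_combination (b3*c4)*h1 + (-(a4*c3))*h2 + (2*a4*b3 - a3*b4)*h3
      linear_combination (-(a3^2+b3*c3))*key + ((a3*a4+b3*c4)*(a3^2+b3*c3))*h1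
  · refine ⟨r, s, 1, by simpa using hrs, by ring, by ring, by linear_combination R1 + R4, ?_⟩
    linear_combination ((r*a3+s*a4) + (b3*c4-b4*c3)/2)*R1
      + ((r*c3+s*c4) - (a4*c3 + c4*d3 - a3*c4 - c3*d4)/2)*R2
      + ((a3*b4 + b3*d4 - a4*b3 - b4*d3)/2)*R3
      + (-(b4*c3 - b3*c4)/2)*R4

set_option maxHeartbeats 2000000 in
theorem stmt8
    (L : Type) [LieRing L] [LieAlgebra ℝ L] [FiniteDimensional ℝ L]
    [LieAlgebra.IsSolvable L]
    (hdim : finrank ℝ L = 5)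
    (huni : ∀ x : L, LinearMap.trace ℝ L (LieAlgebra.ad ℝ L x) = 0)
    (N : LieIdeal ℝ L)
    (hNnil : LieRing.IsNilpotent N)
    (hNmax : ∀ I : LieIdeal ℝ L, LieRing.IsNilpotent I → I ≤ N) :
    ¬ ∃ b : Basis (Fin 3) ℝ N,
        ⁅b 2, b 1⁆ = b 0 ∧ ⁅b 2, b 0⁆ = 0 ∧ ⁅b 1, b 0⁆ = 0 := by
  rintro ⟨b, hb21, hb20, hb10⟩
  -- extend to a basis of `L`
  obtain ⟨e, he⟩ : ∃ e : Basis (Fin 3 ⊕ Fin 2) ℝ L,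
      ∀ i : Fin 3, e (Sum.inl i) = (b i : L) := by
    obtain ⟨W, hW⟩ := Submodule.exists_isCompl (N.toSubmodule : Submodule ℝ L)
    have hN3 : finrank ℝ N.toSubmodule = 3 := by
      have h := finrank_eq_card_basis b; simp at h; exact h
    have hW2 : finrank ℝ W = 2 := by
      have := Submodule.finrank_add_eq_of_isCompl hW
      omega
    let c : Basis (Fin 2) ℝ W := (finBasis ℝ W).reindex (finCongr hW2)
    refine ⟨(b.prod c).map (Submodule.prodEquivOfIsCompl _ _ hW), fun i => ?_⟩
    rw [Basis.map_apply, Basis.prod_apply]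
    show ((b i : L) + ((0 : W) : L)) = _
    simp
  -- notation
  set n0 : L := e (Sum.inl 0) with hn0
  set n1 : L := e (Sum.inl 1) with hn1
  set n2 : L := e (Sum.inl 2) with hn2
  set y1 : L := e (Sum.inr 0) with hy1
  set y2 : L := e (Sum.inr 1) with hy2
  -- brackets among the nᵢ
  have hB21 : ⁅n2, n1⁆ = n0 := by
    rw [hn2, hn1, hn0, he, he, he]
    exact congrArg (fun z : N => (z : L)) hb21
  have hB20 : ⁅n2, n0⁆ = 0 := by
    rw [hn2, hn0, he, he]
    exact congrArg (fun z : N => (z : L)) hb20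
  have hB10 : ⁅n1, n0⁆ = 0 := by
    rw [hn1, hn0, he, he]
    exact congrArg (fun z : N => (z : L)) hb10
  have hB12 : ⁅n1, n2⁆ = -n0 := by rw [← lie_skew, hB21]
  have hB01 : ⁅n0, n1⁆ = 0 := by rw [← lie_skew, hB10, neg_zero]
  have hB02 : ⁅n0, n2⁆ = 0 := by rw [← lie_skew, hB20, neg_zero]
  -- coordinates of basis vectors
  have hrepr_e : ∀ k k' : Fin 3 ⊕ Fin 2, e.repr (e k') k = if k' = k then 1 else 0 := by
    intro k k'
    rw [Basis.repr_self, Finsupp.single_apply]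
  -- membership in N
  have hNel : ∀ i : Fin 3, e (Sum.inl i) ∈ N.toSubmodule := by
    intro i; rw [he]; exact (b i).2
  have hmemN : ∀ x : L, x ∈ N.toSubmodule ↔
      e.repr x (Sum.inr 0) = 0 ∧ e.repr x (Sum.inr 1) = 0 := by
    intro x
    constructor
    · intro hx
      have hxe : x = ∑ i : Fin 3, b.repr ⟨x, hx⟩ i • e (Sum.inl i) := by
        have h := congrArg (fun z : N => (z : L)) (b.sum_repr ⟨x, hx⟩)
        simp only [he]
        refine h.symm.trans ?_
        push_cast; rfl
      constructor <;>
      · rw [hxe]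
        simp [hrepr_e]
    · rintro ⟨h0, h1⟩
      have hxe := e.sum_repr x
      rw [Fintype.sum_sum_type] at hxe
      rw [← hxe]
      refine Submodule.add_mem _ (Submodule.sum_mem _ fun i _ => Submodule.smul_mem _ _ (hNel i)) ?_
      rw [Fin.sum_univ_two, h0, h1]
      simp
  -- decomposition of elements of N
  have hdecN : ∀ x ∈ N.toSubmodule, x
      = e.repr x (Sum.inl 0) • n0 + e.repr x (Sum.inl 1) • n1 + e.repr x (Sum.inl 2) • n2 := by
    intro x hx
    have hxe := e.sum_repr x
    rw [Fintype.sum_sum_type, Fin.sum_univ_three, Fin.sum_univ_two] at hxe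
    rw [(hmemN x).1 hx |>.1, (hmemN x).1 hx |>.2] at hxe
    simpa [hn0, hn1, hn2] using hxe.symm
  -- brackets within N land in ℝ∙n0
  have hK1 : ∀ m ∈ N.toSubmodule, ∀ m' ∈ N.toSubmodule, ∃ t : ℝ, ⁅m, m'⁆ = t • n0 := by
    intro m hm m' hm'
    refine ⟨e.repr m (Sum.inl 2) * e.repr m' (Sum.inl 1)
      - e.repr m (Sum.inl 1) * e.repr m' (Sum.inl 2), ?_⟩
    conv_lhs => rw [hdecN m hm, hdecN m' hm']
    simp only [lie_add, add_lie, lie_smul, smul_lie, hB21, hB20, hB10, hB12, hB01, hB02,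
      lie_self, smul_zero, zero_add, add_zero, smul_neg]
    module
  -- n0 is central in N
  have hcent : ∀ m ∈ N.toSubmodule, ⁅m, n0⁆ = 0 := by
    intro m hm
    conv_lhs => rw [hdecN m hm]
    simp [add_lie, smul_lie, hB10, hB20, lie_self]
  -- N is an ideal
  have hNlie : ∀ (x : L), ∀ m ∈ N.toSubmodule, ⁅x, m⁆ ∈ N.toSubmodule := by
    intro x m hm; exact N.lie_mem hm
  -- structure coefficients
  set fp : L → ℝ := fun x => e.repr ⁅x, n1⁆ (Sum.inl 0) with hfp
  set fa : L → ℝ := fun x => e.repr ⁅x, n1⁆ (Sum.inl 1) with hfa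
  set fc : L → ℝ := fun x => e.repr ⁅x, n1⁆ (Sum.inl 2) with hfc
  set fq : L → ℝ := fun x => e.repr ⁅x, n2⁆ (Sum.inl 0) with hfq
  set fb : L → ℝ := fun x => e.repr ⁅x, n2⁆ (Sum.inl 1) with hfb
  set fd : L → ℝ := fun x => e.repr ⁅x, n2⁆ (Sum.inl 2) with hfd
  have hbr1 : ∀ x : L, ⁅x, n1⁆ = fp x • n0 + fa x • n1 + fc x • n2 :=
    fun x => hdecN _ (hNlie x n1 (hNel 1))
  have hbr2 : ∀ x : L, ⁅x, n2⁆ = fq x • n0 + fb x • n1 + fd x • n2 :=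
    fun x => hdecN _ (hNlie x n2 (hNel 2))
  -- action on the centre
  have hK2 : ∀ x : L, ⁅x, n0⁆ = (fa x + fd x) • n0 := by
    intro x
    have h0 : ⁅x, n0⁆ = ⁅x, ⁅n2, n1⁆⁆ := by rw [hB21]
    rw [h0, leibniz_lie, hbr2 x, hbr1 x]
    simp only [add_lie, smul_lie, lie_add, lie_smul, hB21, hB20, hB10, hB12, hB01, hB02,
      lie_self, smul_zero, zero_add, add_zero]
    module
  -- trace identity
  have htrace : ∀ x : L, (fa x + fd x) + fa x + fd x
      + e.repr ⁅x, y1⁆ (Sum.inr 0) + e.repr ⁅x, y2⁆ (Sum.inr 1) = 0 := by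
    intro x
    have h1 := huni x
    rw [LinearMap.trace_eq_matrix_trace ℝ e] at h1
    rw [Matrix.trace] at h1
    simp only [Matrix.diag, LinearMap.toMatrix_apply, LieAlgebra.ad_apply] at h1
    rw [Fintype.sum_sum_type, Fin.sum_univ_three, Fin.sum_univ_two] at h1
    have h2 : e.repr ⁅x, n0⁆ (Sum.inl 0) = fa x + fd x := by
      rw [hK2 x]
      simp [hn0, hrepr_e]
    rw [← hn0, ← hn1, ← hn2, ← hy1, ← hy2, h2] at h1
    rw [hfa, hfd] at h1 ⊢
    linarith [h1]
  -- the quotient data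
  set u' : L := ⁅y1, y2⁆ with hu'
  set r : ℝ := e.repr u' (Sum.inr 0) with hr
  set s : ℝ := e.repr u' (Sum.inr 1) with hs
  have hU1 : 2*(fa y1 + fd y1) + s = 0 := by
    have h := htrace y1
    rw [lie_self] at h
    simp only [map_zero, Finsupp.coe_zero, Pi.zero_apply] at h
    rw [← hu', ← hs] at h
    linarith
  have hU2 : 2*(fa y2 + fd y2) - r = 0 := by
    have h := htrace y2
    have h21 : ⁅y2, y1⁆ = -u' := by rw [hu', ← lie_skew]
    rw [lie_self, h21] at h
    simp only [map_zero, map_neg, Finsupp.coe_zero, Pi.zero_apply,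
      Finsupp.coe_neg, Pi.neg_apply] at h
    rw [← hr] at h
    linarith
  -- linearity of coordinates of brackets
  have hlin : ∀ (kk : Fin 3 ⊕ Fin 2) (mm : L) (t t' : ℝ) (x x' : L),
      e.repr ⁅t • x + t' • x', mm⁆ kk = t * e.repr ⁅x, mm⁆ kk + t' * e.repr ⁅x', mm⁆ kk := by
    intro kk mm t t' x x'
    rw [add_lie, smul_lie, smul_lie]
    simp
  -- the element u ∈ N
  set u : L := u' - r • y1 - s • y2 with hu
  have huN : u ∈ N.toSubmodule := by
    rw [hmemN]
    constructor <;>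
    · rw [hu]
      simp [hrepr_e, hr, hs, hy1, hy2]
  have hu'u : u' = u + (r • y1 + s • y2) := by rw [hu]; abel
  -- pointwise forms of the coefficient functions
  have hfa' : ∀ x : L, fa x = e.repr ⁅x, n1⁆ (Sum.inl 1) := fun x => by rw [hfa]
  have hfb' : ∀ x : L, fb x = e.repr ⁅x, n2⁆ (Sum.inl 1) := fun x => by rw [hfb]
  have hfc' : ∀ x : L, fc x = e.repr ⁅x, n1⁆ (Sum.inl 2) := fun x => by rw [hfc]
  have hfd' : ∀ x : L, fd x = e.repr ⁅x, n2⁆ (Sum.inl 2) := fun x => by rw [hfd]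
  -- coordinate evaluation lemmas
  have hr0 : ∀ k, e.repr n0 k = if (Sum.inl 0 : Fin 3 ⊕ Fin 2) = k then 1 else 0 := by
    intro k; rw [hn0]; exact hrepr_e k _
  have hr1 : ∀ k, e.repr n1 k = if (Sum.inl 1 : Fin 3 ⊕ Fin 2) = k then 1 else 0 := by
    intro k; rw [hn1]; exact hrepr_e k _
  have hr2 : ∀ k, e.repr n2 k = if (Sum.inl 2 : Fin 3 ⊕ Fin 2) = k then 1 else 0 := by
    intro k; rw [hn2]; exact hrepr_e k _
  have hn1N : n1 ∈ N.toSubmodule := hNel 1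
  have hn2N : n2 ∈ N.toSubmodule := hNel 2
  -- the coefficient functions vanish on N
  have hfN1 : ∀ m ∈ N.toSubmodule, fa m = 0 ∧ fc m = 0 := by
    intro m hm
    obtain ⟨t, ht⟩ := hK1 m hm n1 hn1N
    constructor
    · rw [hfa' m, ht]; simp [hr0]
    · rw [hfc' m, ht]; simp [hr0]
  have hfN2 : ∀ m ∈ N.toSubmodule, fb m = 0 ∧ fd m = 0 := by
    intro m hm
    obtain ⟨t, ht⟩ := hK1 m hm n2 hn2N
    constructor
    · rw [hfb' m, ht]; simp [hr0]
    · rw [hfd' m, ht]; simp [hr0]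
  -- decomposition of the coefficients of u'
  have hfu'a : fa u' = r * fa y1 + s * fa y2 := by
    rw [hfa' u', hfa' y1, hfa' y2, hu'u, add_lie, add_lie, smul_lie, smul_lie]
    have h0 : e.repr ⁅u, n1⁆ (Sum.inl 1) = 0 := by rw [← hfa' u]; exact (hfN1 u huN).1
    simp [map_add, map_smul, h0]
  have hfu'b : fb u' = r * fb y1 + s * fb y2 := by
    rw [hfb' u', hfb' y1, hfb' y2, hu'u, add_lie, add_lie, smul_lie, smul_lie]
    have h0 : e.repr ⁅u, n2⁆ (Sum.inl 1) = 0 := by rw [← hfb' u]; exact (hfN2 u huN).1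
    simp [map_add, map_smul, h0]
  have hfu'c : fc u' = r * fc y1 + s * fc y2 := by
    rw [hfc' u', hfc' y1, hfc' y2, hu'u, add_lie, add_lie, smul_lie, smul_lie]
    have h0 : e.repr ⁅u, n1⁆ (Sum.inl 2) = 0 := by rw [← hfc' u]; exact (hfN1 u huN).2
    simp [map_add, map_smul, h0]
  have hfu'd : fd u' = r * fd y1 + s * fd y2 := by
    rw [hfd' u', hfd' y1, hfd' y2, hu'u, add_lie, add_lie, smul_lie, smul_lie]
    have h0 : e.repr ⁅u, n2⁆ (Sum.inl 2) = 0 := by rw [← hfd' u]; exact (hfN2 u huN).2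
    simp [map_add, map_smul, h0]
  -- the commutator computations
  have hE1 : fa u' = fb y1 * fc y2 - fb y2 * fc y1 := by
    rw [hfa' u', hu', lie_lie, hbr1 y2, hbr1 y1]
    simp only [lie_add, lie_smul, hK2 y1, hK2 y2, hbr1, hbr2]
    simp [map_sub, map_add, map_smul, hr0, hr1, hr2]
    ring
  have hE3 : fc u' = fa y2 * fc y1 + fc y2 * fd y1 - fa y1 * fc y2 - fc y1 * fd y2 := by
    rw [hfc' u', hu', lie_lie, hbr1 y2, hbr1 y1]
    simp only [lie_add, lie_smul, hK2 y1, hK2 y2, hbr1, hbr2]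
    simp [map_sub, map_add, map_smul, hr0, hr1, hr2]
    ring
  have hE2 : fb u' = fa y1 * fb y2 + fb y1 * fd y2 - fa y2 * fb y1 - fb y2 * fd y1 := by
    rw [hfb' u', hu', lie_lie, hbr2 y2, hbr2 y1]
    simp only [lie_add, lie_smul, hK2 y1, hK2 y2, hbr1, hbr2]
    simp [map_sub, map_add, map_smul, hr0, hr1, hr2]
    ring
  have hE4 : fd u' = fb y2 * fc y1 - fb y1 * fc y2 := by
    rw [hfd' u', hu', lie_lie, hbr2 y2, hbr2 y1]
    simp only [lie_add, lie_smul, hK2 y1, hK2 y2, hbr1, hbr2]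
    simp [map_sub, map_add, map_smul, hr0, hr1, hr2]
    ring
  -- apply the scalar lemma
  obtain ⟨t3, t4, k, ht34, hkr, hks, hc2, hc3⟩ :=
    aux_scalars (fa y1) (fb y1) (fc y1) (fd y1) (fa y2) (fb y2) (fc y2) (fd y2) r s
      (hfu'a.symm.trans hE1) (hfu'b.symm.trans hE2) (hfu'c.symm.trans hE3)
      (hfu'd.symm.trans hE4) hU1 hU2
  -- the distinguished element y
  set y : L := t3 • y1 + t4 • y2 with hyy
  have hry1 : ∀ k, e.repr y1 k = if (Sum.inr 0 : Fin 3 ⊕ Fin 2) = k then 1 else 0 := by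
    intro k; rw [hy1]; exact hrepr_e k _
  have hry2 : ∀ k, e.repr y2 k = if (Sum.inr 1 : Fin 3 ⊕ Fin 2) = k then 1 else 0 := by
    intro k; rw [hy2]; exact hrepr_e k _
  have hyN : y ∉ N.toSubmodule := by
    intro hy
    obtain ⟨h0, h1⟩ := (hmemN y).1 hy
    rw [hyy] at h0 h1
    simp [map_add, map_smul, hry1, hry2] at h0 h1
    exact ht34 ⟨h0, h1⟩
  -- coefficients of y
  have hfya : fa y = t3 * fa y1 + t4 * fa y2 := by
    rw [hfa' y, hfa' y1, hfa' y2, hyy, add_lie, smul_lie, smul_lie]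
    simp [map_add, map_smul]
  have hfyb : fb y = t3 * fb y1 + t4 * fb y2 := by
    rw [hfb' y, hfb' y1, hfb' y2, hyy, add_lie, smul_lie, smul_lie]
    simp [map_add, map_smul]
  have hfyc : fc y = t3 * fc y1 + t4 * fc y2 := by
    rw [hfc' y, hfc' y1, hfc' y2, hyy, add_lie, smul_lie, smul_lie]
    simp [map_add, map_smul]
  have hfyd : fd y = t3 * fd y1 + t4 * fd y2 := by
    rw [hfd' y, hfd' y1, hfd' y2, hyy, add_lie, smul_lie, smul_lie]
    simp [map_add, map_smul]
  have hyc2 : fa y + fd y = 0 := by rw [hfya, hfyd]; linear_combination hc2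
  have hyc3 : fa y * fa y + fb y * fc y = 0 := by
    rw [hfya, hfyb, hfyc]
    linear_combination hc3
  have hy0 : ⁅y, n0⁆ = 0 := by
    rw [hK2 y, hyc2, zero_smul]
  -- squares of ad y on N fall into the centre
  have hysq1 : ⁅y, ⁅y, n1⁆⁆ = (fa y * fp y + fc y * fq y) • n0 := by
    rw [hbr1 y]
    simp only [lie_add, lie_smul, hy0, hbr1, hbr2, smul_zero]
    match_scalars
    · ring
    · linear_combination hyc3
    · linear_combination (fc y) * hyc2
  have hysq2 : ⁅y, ⁅y, n2⁆⁆ = (fb y * fp y + fd y * fq y) • n0 := by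
    rw [hbr2 y]
    simp only [lie_add, lie_smul, hy0, hbr1, hbr2, smul_zero]
    match_scalars
    · ring
    · linear_combination (fb y) * hyc2
    · linear_combination hyc3 + (fd y - fa y) * hyc2
  have hysqm : ∀ m ∈ N.toSubmodule, ⁅y, ⁅y, m⁆⁆ ∈ (ℝ ∙ n0) := by
    intro m hm
    rw [hdecN m hm]
    simp only [lie_add, lie_smul, hy0, hysq1, hysq2, smul_zero, zero_add, smul_smul]
    refine Submodule.add_mem _ ?_ ?_ <;>
      exact Submodule.smul_mem _ _ (Submodule.mem_span_singleton_self n0)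
  -- the enlarged ideal
  set S : Submodule ℝ L := N.toSubmodule ⊔ (ℝ ∙ y) with hS
  have hNS : N.toSubmodule ≤ S := le_sup_left
  have hyS : y ∈ S := Submodule.mem_sup_right (Submodule.mem_span_singleton_self y)
  have hmemS : ∀ m ∈ S, ∃ (n : L) (t : ℝ), n ∈ N.toSubmodule ∧ m = n + t • y := by
    intro m hm
    rw [hS, Submodule.mem_sup] at hm
    obtain ⟨n, hn, z, hz, rfl⟩ := hm
    rw [Submodule.mem_span_singleton] at hz
    obtain ⟨t, rfl⟩ := hz
    exact ⟨n, t, hn, rfl⟩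
  -- bracketing with y stays in S
  have hidl : ∀ x : L, ⁅x, y⁆ ∈ S := by
    intro x
    have hx : x ∈ Submodule.span ℝ (Set.range ⇑e) := by rw [e.span_eq]; trivial
    refine Submodule.span_induction ?_ ?_ ?_ ?_ hx
    · rintro x ⟨kk, rfl⟩
      rcases kk with i | j
      · rw [← lie_skew]
        exact neg_mem (hNS (N.lie_mem (hNel i)))
      · fin_cases j
        · show ⁅e (Sum.inr 0), y⁆ ∈ S
          have heq : ⁅e (Sum.inr 0), y⁆ = t4 • u + (t4 * k) • y := by
            rw [← hy1, hyy, lie_add, lie_smul, lie_smul, lie_self, smul_zero, zero_add,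
              ← hu', hu'u, hkr, hks]
            module
          rw [heq]
          exact add_mem (hNS (Submodule.smul_mem _ _ huN)) (Submodule.smul_mem _ _ hyS)
        · show ⁅e (Sum.inr 1), y⁆ ∈ S
          have h21 : ⁅y2, y1⁆ = -u' := by rw [hu', ← lie_skew]
          have heq : ⁅e (Sum.inr 1), y⁆ = (-t3) • u + (-(t3 * k)) • y := by
            rw [← hy2, hyy, lie_add, lie_smul, lie_smul, lie_self, smul_zero, add_zero,
              h21, hu'u, hkr, hks]
            module
          rw [heq]
          exact add_mem (hNS (Submodule.smul_mem _ _ huN)) (Submodule.smul_mem _ _ hyS)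
    · rw [zero_lie]; exact zero_mem _
    · intro p q _ _ hp hq
      rw [add_lie]; exact add_mem hp hq
    · intro c p _ hp
      rw [smul_lie]; exact Submodule.smul_mem _ _ hp
  -- S is a Lie ideal
  have hlieS : ∀ (x m : L), m ∈ S → ⁅x, m⁆ ∈ S := by
    intro x m hm
    obtain ⟨n, t, hn, rfl⟩ := hmemS m hm
    rw [lie_add, lie_smul]
    exact add_mem (hNS (N.lie_mem hn)) (Submodule.smul_mem _ _ (hidl x))
  set I : LieIdeal ℝ L := { toSubmodule := S, lie_mem := fun {x m} hm => hlieS x m hm } with hI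
  -- auxiliary subspaces for nilpotency
  set Wsub : Submodule ℝ L := Submodule.span ℝ ({n0, ⁅y, n1⁆, ⁅y, n2⁆} : Set L) with hWsub
  have hyn1N : ⁅y, n1⁆ ∈ N.toSubmodule := N.lie_mem hn1N
  have hyn2N : ⁅y, n2⁆ ∈ N.toSubmodule := N.lie_mem hn2N
  have hyn : ∀ m ∈ N.toSubmodule,
      ⁅y, m⁆ = e.repr m (Sum.inl 1) • ⁅y, n1⁆ + e.repr m (Sum.inl 2) • ⁅y, n2⁆ := by
    intro m hm
    have hdm := hdecN m hm
    calc ⁅y, m⁆ = ⁅y, e.repr m (Sum.inl 0) • n0 + e.repr m (Sum.inl 1) • n1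
        + e.repr m (Sum.inl 2) • n2⁆ := by rw [← hdm]
    _ = _ := by
        simp only [lie_add, lie_smul, hy0, smul_zero, zero_add]
  have hL1 : ∀ p ∈ S, ∀ q ∈ S, ⁅p, q⁆ ∈ Wsub := by
    intro p hp q hq
    obtain ⟨n, t, hn, rfl⟩ := hmemS p hp
    obtain ⟨n', t', hn', rfl⟩ := hmemS q hq
    have heq : ⁅n + t • y, n' + t' • y⁆
        = ⁅n, n'⁆ + t' • ⁅n, y⁆ + t • ⁅y, n'⁆ + (t * t') • ⁅y, y⁆ := by
      simp only [lie_add, add_lie, lie_smul, smul_lie, smul_smul]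
      module
    rw [heq, lie_self, smul_zero, add_zero]
    have h1 : ⁅n, n'⁆ ∈ Wsub := by
      obtain ⟨τ, hτ⟩ := hK1 n hn n' hn'
      rw [hτ]
      exact Submodule.smul_mem _ _ (Submodule.subset_span (by simp))
    have h2 : ⁅y, n'⁆ ∈ Wsub := by
      rw [hyn n' hn']
      exact add_mem (Submodule.smul_mem _ _ (Submodule.subset_span (by simp)))
        (Submodule.smul_mem _ _ (Submodule.subset_span (by simp)))
    have h3 : ⁅n, y⁆ ∈ Wsub := by
      rw [← lie_skew, hyn n hn]
      exact neg_mem (add_mem (Submodule.smul_mem _ _ (Submodule.subset_span (by simp)))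
        (Submodule.smul_mem _ _ (Submodule.subset_span (by simp))))
    exact add_mem (add_mem h1 (Submodule.smul_mem _ _ h3)) (Submodule.smul_mem _ _ h2)
  have hL2 : ∀ p ∈ S, ∀ w ∈ Wsub, ⁅p, w⁆ ∈ (ℝ ∙ n0) := by
    intro p hp w hw
    obtain ⟨n, t, hn, rfl⟩ := hmemS p hp
    rw [hWsub] at hw
    refine Submodule.span_induction ?_ ?_ ?_ ?_ hw
    · intro w hw'
      simp only [Set.mem_insert_iff, Set.mem_singleton_iff] at hw'
      rcases hw' with rfl | rfl | rfl
      · have : ⁅n + t • y, n0⁆ = 0 := by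
          rw [add_lie, smul_lie, hcent n hn, hy0, smul_zero, add_zero]
        rw [this]; exact zero_mem _
      · rw [add_lie, smul_lie]
        refine add_mem ?_ (Submodule.smul_mem _ _ ?_)
        · obtain ⟨τ, hτ⟩ := hK1 n hn _ hyn1N
          rw [hτ]; exact Submodule.smul_mem _ _ (Submodule.mem_span_singleton_self n0)
        · rw [hysq1]; exact Submodule.smul_mem _ _ (Submodule.mem_span_singleton_self n0)
      · rw [add_lie, smul_lie]
        refine add_mem ?_ (Submodule.smul_mem _ _ ?_)
        · obtain ⟨τ, hτ⟩ := hK1 n hn _ hyn2N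
          rw [hτ]; exact Submodule.smul_mem _ _ (Submodule.mem_span_singleton_self n0)
        · rw [hysq2]; exact Submodule.smul_mem _ _ (Submodule.mem_span_singleton_self n0)
    · rw [lie_zero]; exact zero_mem _
    · intro w w' _ _ hw1 hw2
      rw [lie_add]; exact add_mem hw1 hw2
    · intro c w _ hw1
      rw [lie_smul]; exact Submodule.smul_mem _ _ hw1
  have hL3 : ∀ p ∈ S, ∀ v ∈ (ℝ ∙ n0), ⁅p, v⁆ = 0 := by
    intro p hp v hv
    obtain ⟨n, t, hn, rfl⟩ := hmemS p hp
    obtain ⟨τ, rfl⟩ := Submodule.mem_span_singleton.1 hv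
    rw [lie_smul, add_lie, smul_lie, hcent n hn, hy0, smul_zero, add_zero, smul_zero]
  have hamb : ∀ z ∈ S, ∀ w ∈ S, ⁅z, ⁅z, ⁅z, w⁆⁆⁆ = (0 : L) := by
    intro z hz w hw
    exact hL3 z hz _ (hL2 z hz _ (hL1 z hz _ hw))
  -- I is a nilpotent Lie algebra
  have hnil : LieRing.IsNilpotent I := by
    haveI : IsNoetherian ℝ I := inferInstanceAs (IsNoetherian ℝ S)
    rw [LieAlgebra.isNilpotent_iff_forall (R := ℝ)]
    intro z
    refine ⟨3, ?_⟩
    ext w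
    have h3 : (((LieAlgebra.ad ℝ I z) ^ 3) w : L) = ⁅(z : L), ⁅(z : L), ⁅(z : L), (w : L)⁆⁆⁆ := by
      rw [pow_succ, pow_succ, pow_one]
      rfl
    rw [h3]
    exact hamb (z : L) z.2 (w : L) w.2
  -- contradiction with maximality
  have hle := hNmax I hnil
  exact hyN (hle hyS)
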